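/- arXiv:math/0605193 — 3 statements merged into one kernel-verified Lean document; each statement's English description precedes it below -/
import Mathlib

section
/- Let G ⊆ G' be an inclusion of graded algebras without zero divisors (graded by an ordered abelian group), and let x be a homogeneous element of G' that is algebraic over G. Then x is integral over the saturation G* of G, where G* = { g/h : g, h ∈ G, h homogeneous, h ≠ 0 }. -/
/-- Let `G ⊆ A` be graded algebras without zero divisors (graded by an ordered abelian
group) and let `x ∈ A` be homogeneous and algebraic over `G`. Then `x` is integral over the
saturation `G* = {g/h : g, h ∈ G, h homogeneous, h ≠ 0}` (inside the fraction field of `A`). -/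
theorem stmt1 {ι : Type*} [AddCommGroup ι] [LinearOrder ι] [IsOrderedAddMonoid ι] [DecidableEq ι]
    {A : Type*} [CommRing A] [IsDomain A]
    (𝒜 : ι → AddSubgroup A) [GradedRing 𝒜]
    (G : Subring A) (hG : ∀ a ∈ G, ∀ d : ι, (DirectSum.decompose 𝒜 a d : A) ∈ G)
    (x : A) (hx : ∃ d, x ∈ 𝒜 d)
    (halg : ∃ (n : ℕ) (a : ℕ → A), (∀ j ≤ n, a j ∈ G) ∧ (∃ j ≤ n, a j ≠ 0) ∧
      ∑ j ∈ Finset.range (n + 1), a j * x ^ j = 0) :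
    ∃ (m : ℕ) (c : ℕ → FractionRing A), 0 < m ∧
      (∀ j < m, ∃ g h : A, g ∈ G ∧ h ∈ G ∧ (∃ d, h ∈ 𝒜 d) ∧ h ≠ 0 ∧
        c j = algebraMap A (FractionRing A) g / algebraMap A (FractionRing A) h) ∧
      (algebraMap A (FractionRing A) x) ^ m
        + ∑ j ∈ Finset.range m, c j * (algebraMap A (FractionRing A) x) ^ j = 0 := by
  classical
  obtain ⟨d, hxd⟩ := hx
  obtain ⟨n, a, haG, ⟨j0, hj0n, hj0⟩, hrel⟩ := halg
  -- find a nonzero homogeneous component of a j0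
  have hcomp : ∃ e : ι, (DirectSum.decompose 𝒜 (a j0) e : A) ≠ 0 := by
    by_contra h
    push_neg at h
    apply hj0
    rw [← DirectSum.sum_support_decompose 𝒜 (a j0)]
    exact Finset.sum_eq_zero fun i _ => h i
  obtain ⟨e, he⟩ := hcomp
  have hwe : ∀ j0' : ℕ, e + j0 • d - j0' • d = e + (j0 • d - j0' • d) := by
    intro j0'; abel
  set b : ℕ → A := fun j => (DirectSum.decompose 𝒜 (a j) (e + j0 • d - j • d) : A) with hb
  -- the homogeneous relation
  have hbrel : ∑ j ∈ Finset.range (n + 1), b j * x ^ j = 0 := by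
    have h1 : ∀ j, (DirectSum.decompose 𝒜 (a j * x ^ j) (e + j0 • d) : A) = b j * x ^ j := by
      intro j
      have hxj : x ^ j ∈ 𝒜 (j • d) := SetLike.pow_mem_graded j hxd
      have := DirectSum.coe_decompose_mul_add_of_right_mem 𝒜 (a := a j) hxj
        (i := e + j0 • d - j • d)
      rwa [sub_add_cancel] at this
    calc ∑ j ∈ Finset.range (n + 1), b j * x ^ j
        = ∑ j ∈ Finset.range (n + 1),
            (DirectSum.decompose 𝒜 (a j * x ^ j) (e + j0 • d) : A) := by
          simp_rw [h1]
      _ = (DirectSum.decompose 𝒜 (∑ j ∈ Finset.range (n + 1), a j * x ^ j) (e + j0 • d) : A) := by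
          rw [DirectSum.decompose_sum, DFinsupp.finset_sum_apply,
            AddSubmonoidClass.coe_finset_sum]
      _ = 0 := by rw [hrel, DirectSum.decompose_zero]; rfl
  have hbj0 : b j0 ≠ 0 := by
    have h2 : e + j0 • d - j0 • d = e := by abel
    have h3 : (DirectSum.decompose 𝒜 (a j0) (e + j0 • d - j0 • d) : A)
        = (DirectSum.decompose 𝒜 (a j0) e : A) := by rw [h2]
    show (DirectSum.decompose 𝒜 (a j0) (e + j0 • d - j0 • d) : A) ≠ 0
    rw [h3]; exact he
  -- bounded degree homogeneity of b j
  have hbmem : ∀ j, b j ∈ 𝒜 (e + j0 • d - j • d) := fun j => SetLike.coe_mem _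
  have hbG : ∀ j, a j ∈ G → b j ∈ G := fun j hj => hG _ hj _
  -- take the top nonzero coefficient
  set S : Finset ℕ := (Finset.range (n + 1)).filter (fun j => b j ≠ 0) with hS
  have hSne : S.Nonempty :=
    ⟨j0, by simp only [hS, Finset.mem_filter, Finset.mem_range]; exact ⟨by omega, hbj0⟩⟩
  set m : ℕ := S.max' hSne with hm
  have hmS : m ∈ S := S.max'_mem hSne
  have hmn : m ≤ n := by
    have := (Finset.mem_filter.mp hmS).1
    rw [Finset.mem_range] at this; omega
  have hbm : b m ≠ 0 := (Finset.mem_filter.mp hmS).2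
  have htrunc : ∑ j ∈ Finset.range (m + 1), b j * x ^ j = 0 := by
    rw [← hbrel]
    apply Finset.sum_subset
    · intro j hj; rw [Finset.mem_range] at *; omega
    · intro j hjn hjm
      rw [Finset.mem_range] at hjn hjm
      have : b j = 0 := by
        by_contra hbj
        have hjS : j ∈ S := Finset.mem_filter.mpr ⟨Finset.mem_range.mpr hjn, hbj⟩
        have := S.le_max' j hjS
        omega
      simp [this]
  have hmpos : 0 < m := by
    rcases Nat.eq_zero_or_pos m with h0 | h
    · exfalso
      apply hbm
      have := htrunc
      rw [h0] at this ⊢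
      simpa using this
    · exact h
  -- now pass to the fraction field
  set K := FractionRing A
  set φ : A →+* K := (algebraMap A K) with hφ
  have hφinj : Function.Injective φ := IsFractionRing.injective A K
  have hφbm : φ (b m) ≠ 0 := fun h => hbm (hφinj (by simpa using h))
  refine ⟨m, fun j => φ (b j) / φ (b m), hmpos, ?_, ?_⟩
  · intro j hj
    exact ⟨b j, b m, hbG j (haG j (by omega)), hbG m (haG m hmn),
      ⟨_, hbmem m⟩, hbm, rfl⟩
  · have key : ∑ j ∈ Finset.range (m + 1), φ (b j) * φ x ^ j = 0 := by
      have := congrArg φ htrunc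
      rw [map_sum] at this
      simpa [map_mul, map_pow] using this
    rw [Finset.sum_range_succ] at key
    have hterm : ∀ j, φ (b m) * (φ (b j) / φ (b m) * φ x ^ j) = φ (b j) * φ x ^ j := by
      intro j
      rw [← mul_assoc, mul_div_assoc', mul_div_cancel_left₀ _ hφbm]
    have hmul : φ (b m) * ((algebraMap A (FractionRing A) x) ^ m
        + ∑ j ∈ Finset.range m, φ (b j) / φ (b m)
          * (algebraMap A (FractionRing A) x) ^ j) = 0 := by
      rw [mul_add, Finset.mul_sum]
      rw [Finset.sum_congr rfl (fun j _ => hterm j)]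
      rw [add_comm]
      exact key
    exact (mul_eq_zero.mp hmul).resolve_left hφbm
end

section
/- Let G ⊆ G' be graded algebras without zero divisors, and let x ∈ G' be homogeneous, satisfying a homogeneous integral relation of degree α over the saturation G* and no algebraic relation of degree less than α over G*. Then every element of the saturation (G[x])* can be written uniquely as a polynomial in x with coefficients in G* of degree strictly less than α; in particular (G[x])* = G*[x]. -/
namespace Stmt2Aux

variable {ι : Type*} [AddCommGroup ι] [LinearOrder ι] [IsOrderedAddMonoid ι] [DecidableEq ι]
    {A : Type*} [CommRing A] [IsDomain A]

/-- membership in the saturation `G*`. -/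
def Sat (𝒜 : ι → AddSubgroup A) (G : Subring A) (c : FractionRing A) : Prop :=
  ∃ g h : A, g ∈ G ∧ h ∈ G ∧ (∃ e, h ∈ 𝒜 e) ∧ h ≠ 0 ∧
    c = algebraMap A (FractionRing A) g / algebraMap A (FractionRing A) h

/-- membership in the `G*`-span of `1, ξ, …, ξ^(α-1)`. -/
def InS (𝒜 : ι → AddSubgroup A) (G : Subring A) (x : A) (α : ℕ) (y : FractionRing A) : Prop :=
  ∃ c : Fin α → FractionRing A, (∀ j, Sat 𝒜 G (c j)) ∧
    y = ∑ j : Fin α, c j * (algebraMap A (FractionRing A) x) ^ (j : ℕ)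

variable (𝒜 : ι → AddSubgroup A) [GradedRing 𝒜] (G : Subring A)

theorem algMap_ne_zero {a : A} (ha : a ≠ 0) : algebraMap A (FractionRing A) a ≠ 0 := by
  simpa [IsFractionRing.to_map_eq_zero_iff] using ha

theorem sat_zero : Sat 𝒜 G 0 :=
  ⟨0, 1, G.zero_mem, G.one_mem, ⟨0, SetLike.GradedOne.one_mem⟩, one_ne_zero, by simp⟩

theorem sat_one : Sat 𝒜 G 1 :=
  ⟨1, 1, G.one_mem, G.one_mem, ⟨0, SetLike.GradedOne.one_mem⟩, one_ne_zero, by simp⟩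

theorem sat_add {c c' : FractionRing A} (hc : Sat 𝒜 G c) (hc' : Sat 𝒜 G c') :
    Sat 𝒜 G (c + c') := by
  obtain ⟨g, h, hg, hh, ⟨e, he⟩, h0, rfl⟩ := hc
  obtain ⟨g', h', hg', hh', ⟨e', he'⟩, h0', rfl⟩ := hc'
  refine ⟨g * h' + g' * h, h * h', G.add_mem (G.mul_mem hg hh') (G.mul_mem hg' hh),
    G.mul_mem hh hh', ⟨e + e', SetLike.mul_mem_graded he he'⟩, mul_ne_zero h0 h0', ?_⟩
  rw [div_add_div _ _ (algMap_ne_zero h0) (algMap_ne_zero h0')]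
  push_cast [map_add, map_mul]
  ring_nf

theorem sat_neg {c : FractionRing A} (hc : Sat 𝒜 G c) : Sat 𝒜 G (-c) := by
  obtain ⟨g, h, hg, hh, he, h0, rfl⟩ := hc
  exact ⟨-g, h, G.neg_mem hg, hh, he, h0, by rw [map_neg, neg_div]⟩

theorem sat_mul {c c' : FractionRing A} (hc : Sat 𝒜 G c) (hc' : Sat 𝒜 G c') :
    Sat 𝒜 G (c * c') := by
  obtain ⟨g, h, hg, hh, ⟨e, he⟩, h0, rfl⟩ := hc
  obtain ⟨g', h', hg', hh', ⟨e', he'⟩, h0', rfl⟩ := hc'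
  exact ⟨g * g', h * h', G.mul_mem hg hg', G.mul_mem hh hh',
    ⟨e + e', SetLike.mul_mem_graded he he'⟩, mul_ne_zero h0 h0',
    by rw [map_mul, map_mul, div_mul_div_comm]⟩

theorem sat_div {c : FractionRing A} (hc : Sat 𝒜 G c) {H : A} (hH : H ∈ G) {e : ι}
    (hHe : H ∈ 𝒜 e) (hH0 : H ≠ 0) : Sat 𝒜 G (c / algebraMap A (FractionRing A) H) := by
  obtain ⟨g, h, hg, hh, ⟨e', he'⟩, h0, rfl⟩ := hc
  exact ⟨g, h * H, hg, G.mul_mem hh hH, ⟨e' + e, SetLike.mul_mem_graded he' hHe⟩,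
    mul_ne_zero h0 hH0, by rw [map_mul, div_div]⟩

theorem decompose_mul_left {h a : A} {f : ι} (hh : h ∈ 𝒜 f) (c : ι) :
    (DirectSum.decompose 𝒜 (h * a) (f + c) : A) = h * (DirectSum.decompose 𝒜 a c : A) := by
  lift h to 𝒜 f using hh
  rw [DirectSum.decompose_mul, DirectSum.decompose_coe, DirectSum.coe_of_mul_apply_add]

theorem decompose_mul_right {b a : A} {f : ι} (hb : b ∈ 𝒜 f) (c : ι) :
    (DirectSum.decompose 𝒜 (a * b) (c + f) : A) = (DirectSum.decompose 𝒜 a c : A) * b := by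
  lift b to 𝒜 f using hb
  rw [DirectSum.decompose_mul, DirectSum.decompose_coe, DirectSum.coe_mul_of_apply_add]

theorem decompose_sum {s : Finset ℕ} {f : ℕ → A} (c : ι) :
    (DirectSum.decompose 𝒜 (∑ j ∈ s, f j) c : A) = ∑ j ∈ s, (DirectSum.decompose 𝒜 (f j) c : A) := by
  classical
  have h1 : DirectSum.decompose 𝒜 (∑ j ∈ s, f j) = ∑ j ∈ s, DirectSum.decompose 𝒜 (f j) :=
    map_sum (DirectSum.decomposeAddEquiv 𝒜) f s
  rw [h1, DFinsupp.finset_sum_apply]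
  exact AddSubmonoidClass.coe_finset_sum _ _

theorem exists_ne_zero_component {H : A} (hH : H ≠ 0) :
    ∃ e, (DirectSum.decompose 𝒜 H e : A) ≠ 0 := by
  classical
  by_contra hall
  push_neg at hall
  apply hH
  rw [← DirectSum.sum_support_decompose 𝒜 H]
  exact Finset.sum_eq_zero fun i _ => hall i

/-- The fraction field of `G` inside `FractionRing A`. -/
def Lfield (G : Subring A) : Subfield (FractionRing A) where
  carrier := {c | ∃ g h : A, g ∈ G ∧ h ∈ G ∧ h ≠ 0 ∧
    c = algebraMap A (FractionRing A) g / algebraMap A (FractionRing A) h}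
  zero_mem' := ⟨0, 1, G.zero_mem, G.one_mem, one_ne_zero, by simp⟩
  one_mem' := ⟨1, 1, G.one_mem, G.one_mem, one_ne_zero, by simp⟩
  add_mem' := by
    rintro a b ⟨g, h, hg, hh, h0, rfl⟩ ⟨g', h', hg', hh', h0', rfl⟩
    refine ⟨g * h' + g' * h, h * h', G.add_mem (G.mul_mem hg hh') (G.mul_mem hg' hh),
      G.mul_mem hh hh', mul_ne_zero h0 h0', ?_⟩
    rw [div_add_div _ _ (algMap_ne_zero h0) (algMap_ne_zero h0')]
    push_cast [map_add, map_mul]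
    ring_nf
  neg_mem' := by
    rintro a ⟨g, h, hg, hh, h0, rfl⟩
    exact ⟨-g, h, G.neg_mem hg, hh, h0, by rw [map_neg, neg_div]⟩
  mul_mem' := by
    rintro a b ⟨g, h, hg, hh, h0, rfl⟩ ⟨g', h', hg', hh', h0', rfl⟩
    exact ⟨g * g', h * h', G.mul_mem hg hg', G.mul_mem hh hh', mul_ne_zero h0 h0',
      by rw [map_mul, map_mul, div_mul_div_comm]⟩
  inv_mem' := by
    rintro a ⟨g, h, hg, hh, h0, rfl⟩
    by_cases hg0 : g = 0
    · exact ⟨0, 1, G.zero_mem, G.one_mem, one_ne_zero, by simp [hg0]⟩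
    · exact ⟨h, g, hh, hg, hg0, by rw [inv_div]⟩

theorem sat_mem_L {c : FractionRing A} (hc : Sat 𝒜 G c) : c ∈ Lfield G := by
  obtain ⟨g, h, hg, hh, _, h0, rfl⟩ := hc
  exact ⟨g, h, hg, hh, h0, rfl⟩

set_option synthInstance.maxHeartbeats 1000000 in
set_option maxHeartbeats 1000000 in
theorem isIntegral_xi (G : Subring A) (x : A) (α : ℕ) (hα : 0 < α)
    (crel : ℕ → FractionRing A) (hsat : ∀ j < α, Sat 𝒜 G (crel j))
    (hrelEq : (algebraMap A (FractionRing A) x) ^ α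
      + ∑ j ∈ Finset.range α, crel j * (algebraMap A (FractionRing A) x) ^ j = 0) :
    IsIntegral (Lfield G) (algebraMap A (FractionRing A) x) := by
  classical
  set cL : ℕ → Lfield G := fun j => if hj : j < α then ⟨crel j, sat_mem_L 𝒜 G (hsat j hj)⟩ else 0
    with hcLdef
  refine ⟨Polynomial.X ^ α + ∑ j ∈ Finset.range α, Polynomial.C (cL j) * Polynomial.X ^ j,
    ?_, ?_⟩
  · refine Polynomial.monic_X_pow_add ?_
    refine lt_of_le_of_lt (Polynomial.degree_sum_le _ _) ?_
    rw [Finset.sup_lt_iff (by exact_mod_cast WithBot.bot_lt_coe α)]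
    intro j hj
    exact lt_of_le_of_lt (Polynomial.degree_C_mul_X_pow_le _ _)
      (by exact_mod_cast Finset.mem_range.mp hj)
  · rw [← Polynomial.aeval_def]
    have hstep : Polynomial.aeval (algebraMap A (FractionRing A) x)
        (Polynomial.X ^ α + ∑ j ∈ Finset.range α, Polynomial.C (cL j) * Polynomial.X ^ j)
        = (algebraMap A (FractionRing A) x) ^ α
          + ∑ j ∈ Finset.range α, crel j * (algebraMap A (FractionRing A) x) ^ j := by
      rw [map_add, map_pow, Polynomial.aeval_X, map_sum]
      congr 1
      refine Finset.sum_congr rfl fun j hj => ?_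
      rw [map_mul, map_pow, Polynomial.aeval_X, Polynomial.aeval_C]
      congr 1
      show ((cL j : Lfield G) : FractionRing A) = crel j
      rw [hcLdef]
      dsimp only
      rw [dif_pos (Finset.mem_range.mp hj)]
    rw [hstep, hrelEq]

set_option synthInstance.maxHeartbeats 1000000 in
set_option maxHeartbeats 1000000 in
theorem inS_mem_adjoin (G : Subring A) (x : A) (α : ℕ) {y : FractionRing A}
    (hy : InS 𝒜 G x α y) :
    y ∈ Algebra.adjoin (Lfield G) {algebraMap A (FractionRing A) x} := by
  obtain ⟨c, hc, rfl⟩ := hy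
  rw [Algebra.adjoin_singleton_eq_range_aeval, AlgHom.mem_range]
  refine ⟨∑ j : Fin α, Polynomial.C (⟨c j, sat_mem_L 𝒜 G (hc j)⟩ : Lfield G)
      * Polynomial.X ^ (j : ℕ), ?_⟩
  rw [map_sum]
  exact Finset.sum_congr rfl fun j _ => by
    rw [map_mul, map_pow, Polynomial.aeval_X, Polynomial.aeval_C]; rfl

set_option synthInstance.maxHeartbeats 1000000 in
set_option maxHeartbeats 1000000 in
theorem exists_common_denom (G : Subring A) (x : A) {h : A}
    (hint : IsIntegral (Lfield G) (algebraMap A (FractionRing A) x))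
    (hmem : algebraMap A (FractionRing A) h
      ∈ Algebra.adjoin (Lfield G) {algebraMap A (FractionRing A) x})
    (hh0 : h ≠ 0) :
    ∃ (n : ℕ) (b : ℕ → A) (H : A), (∀ j, b j ∈ G) ∧ H ∈ G ∧ H ≠ 0 ∧
      h * (∑ j ∈ Finset.range n, b j * x ^ j) = H := by
  classical
  set φ := algebraMap A (FractionRing A) with hφdef
  have hinvadj : (φ h)⁻¹ ∈ Algebra.adjoin (Lfield G) {φ x} :=
    (IsIntegral.of_mem_of_fg _ hint.fg_adjoin_singleton _ hmem).inv_mem hmem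
  rw [Algebra.adjoin_singleton_eq_range_aeval] at hinvadj
  obtain ⟨q, hq0⟩ := hinvadj
  have hq : Polynomial.aeval (φ x) q = (φ h)⁻¹ := hq0
  have hqexp : (φ h)⁻¹ = ∑ j ∈ Finset.range (q.natDegree + 1),
      ((q.coeff j : Lfield G) : FractionRing A) * φ x ^ j := by
    rw [← hq, Polynomial.aeval_eq_sum_range]
    exact Finset.sum_congr rfl fun j _ => by rw [Algebra.smul_def]; rfl
  set n := q.natDegree + 1 with hndef
  have hLmem : ∀ j : ℕ, ∃ g h : A, g ∈ G ∧ h ∈ G ∧ h ≠ 0 ∧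
      ((q.coeff j : Lfield G) : FractionRing A) = φ g / φ h := fun j => (q.coeff j).2
  choose u v hu hv hv0 hco using hLmem
  refine ⟨n, fun j => u j * ∏ k ∈ (Finset.range n).erase j, v k, ∏ k ∈ Finset.range n, v k,
    fun j => G.mul_mem (hu j) (Subring.prod_mem G fun k _ => hv k),
    Subring.prod_mem G fun k _ => hv k, Finset.prod_ne_zero_iff.mpr fun k _ => hv0 k, ?_⟩
  apply IsFractionRing.injective A (FractionRing A)
  have hφa : φ (∑ j ∈ Finset.range n, (u j * ∏ k ∈ (Finset.range n).erase j, v k) * x ^ j)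
      = φ (∏ k ∈ Finset.range n, v k) * (φ h)⁻¹ := by
    rw [hqexp, Finset.mul_sum, map_sum]
    refine Finset.sum_congr rfl fun j hj => ?_
    rw [map_mul, map_mul, map_pow]
    have hvj0 : φ (v j) ≠ 0 := algMap_ne_zero (hv0 j)
    have hHsplit : φ (∏ k ∈ Finset.range n, v k)
        = φ (v j) * φ (∏ k ∈ (Finset.range n).erase j, v k) := by
      rw [← map_mul, Finset.mul_prod_erase _ _ hj]
    rw [hco j, hHsplit]
    field_simp
  rw [map_mul, hφa, mul_comm (φ (∏ k ∈ Finset.range n, v k)), ← mul_assoc,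
    mul_inv_cancel₀ (algMap_ne_zero hh0), one_mul]

end Stmt2Aux

set_option maxHeartbeats 2000000 in
set_option synthInstance.maxHeartbeats 1000000 in
/-- Suppose the homogeneous element `x ∈ A` satisfies a homogeneous integral relation of
degree `α` over the saturation `G*` and no algebraic relation of degree `< α` over `G*`.
Then every element of `(G[x])*` is uniquely a polynomial in `x` of degree `< α` with
coefficients in `G*`. -/
theorem stmt2 {ι : Type*} [AddCommGroup ι] [LinearOrder ι] [IsOrderedAddMonoid ι] [DecidableEq ι]
    {A : Type*} [CommRing A] [IsDomain A]
    (𝒜 : ι → AddSubgroup A) [GradedRing 𝒜]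
    (G : Subring A) (hG : ∀ a ∈ G, ∀ d : ι, (DirectSum.decompose 𝒜 a d : A) ∈ G)
    (x : A) (d : ι) (hx : x ∈ 𝒜 d)
    (α : ℕ) (hα : 0 < α)
    -- homogeneous integral relation of degree `α` over `G*`
    (hrel : ∃ c : ℕ → FractionRing A,
      (∀ j < α, ∃ g h : A, g ∈ G ∧ h ∈ G ∧ h ≠ 0 ∧
        (∃ e : ι, h ∈ 𝒜 e ∧ g ∈ 𝒜 (e + (α - j) • d)) ∧
        c j = algebraMap A (FractionRing A) g / algebraMap A (FractionRing A) h) ∧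
      (algebraMap A (FractionRing A) x) ^ α
        + ∑ j ∈ Finset.range α, c j * (algebraMap A (FractionRing A) x) ^ j = 0)
    -- no algebraic relation of degree `< α` over `G*`
    (hmin : ∀ m < α, ∀ c : ℕ → FractionRing A,
      (∀ j ≤ m, ∃ g h : A, g ∈ G ∧ h ∈ G ∧ (∃ e, h ∈ 𝒜 e) ∧ h ≠ 0 ∧
        c j = algebraMap A (FractionRing A) g / algebraMap A (FractionRing A) h) →
      (∃ j ≤ m, c j ≠ 0) →
      ∑ j ∈ Finset.range (m + 1), c j * (algebraMap A (FractionRing A) x) ^ j ≠ 0) :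
    ∀ y : FractionRing A,
      (∃ g h : A, g ∈ Subring.closure (↑G ∪ {x}) ∧ h ∈ Subring.closure (↑G ∪ {x}) ∧
        (∃ e, h ∈ 𝒜 e) ∧ h ≠ 0 ∧
        y = algebraMap A (FractionRing A) g / algebraMap A (FractionRing A) h) →
      ∃! c : Fin α → FractionRing A,
        (∀ j, ∃ g h : A, g ∈ G ∧ h ∈ G ∧ (∃ e, h ∈ 𝒜 e) ∧ h ≠ 0 ∧
          c j = algebraMap A (FractionRing A) g / algebraMap A (FractionRing A) h) ∧
        y = ∑ j : Fin α, c j * (algebraMap A (FractionRing A) x) ^ (j : ℕ) := by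
  classical
  open Stmt2Aux in
  obtain ⟨crel, hcrel, hrelEq⟩ := hrel
  set φ := algebraMap A (FractionRing A) with hφdef
  have hcrelSat : ∀ j < α, Sat 𝒜 G (crel j) := by
    intro j hj
    obtain ⟨g, h, hg, hh, h0, ⟨e, he, _⟩, hc⟩ := hcrel j hj
    exact ⟨g, h, hg, hh, ⟨e, he⟩, h0, hc⟩
  -- basic closure properties of `S`, the `G*`-span of `1, ξ, …, ξ^(α-1)`
  have inS_zero : InS 𝒜 G x α 0 := ⟨fun _ => 0, fun _ => sat_zero 𝒜 G, by simp⟩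
  have inS_add : ∀ {y z}, InS 𝒜 G x α y → InS 𝒜 G x α z → InS 𝒜 G x α (y + z) := by
    rintro y z ⟨c, hc, rfl⟩ ⟨c', hc', rfl⟩
    exact ⟨fun j => c j + c' j, fun j => sat_add 𝒜 G (hc j) (hc' j),
      by rw [← Finset.sum_add_distrib]; exact Finset.sum_congr rfl fun j _ => by ring⟩
  have inS_smul : ∀ {t y}, Sat 𝒜 G t → InS 𝒜 G x α y → InS 𝒜 G x α (t * y) := by
    rintro t y ht ⟨c, hc, rfl⟩
    exact ⟨fun j => t * c j, fun j => sat_mul 𝒜 G ht (hc j),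
      by rw [Finset.mul_sum]; exact Finset.sum_congr rfl fun j _ => by ring⟩
  have inS_sum : ∀ {β : Type} (s : Finset β) (f : β → FractionRing A),
      (∀ b ∈ s, InS 𝒜 G x α (f b)) → InS 𝒜 G x α (∑ b ∈ s, f b) := by
    intro β s f hf
    refine Finset.sum_induction f _ (fun u v hu hv => inS_add hu hv) inS_zero hf
  have inS_sat : ∀ {t}, Sat 𝒜 G t → InS 𝒜 G x α t := by
    intro t ht
    refine ⟨fun j => if j = ⟨0, hα⟩ then t else 0, ?_, ?_⟩
    · intro j; dsimp only; split_ifs; exacts [ht, sat_zero 𝒜 G]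
    · rw [Finset.sum_eq_single (⟨0, hα⟩ : Fin α)]
      · simp
      · intro b _ hb; simp [hb]
      · intro hmem; exact absurd (Finset.mem_univ _) hmem
  have hxpow : ∀ k, InS 𝒜 G x α (φ x ^ k) := by
    intro k
    induction k using Nat.strong_induction_on with
    | _ k ih =>
      by_cases hk : k < α
      · refine ⟨fun j => if j = ⟨k, hk⟩ then 1 else 0, ?_, ?_⟩
        · intro j; dsimp only; split_ifs; exacts [sat_one 𝒜 G, sat_zero 𝒜 G]
        · rw [Finset.sum_eq_single (⟨k, hk⟩ : Fin α)]
          · simp [hφdef]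
          · intro b _ hb; simp [hb]
          · intro hmem; exact absurd (Finset.mem_univ _) hmem
      · push_neg at hk
        have hξα : φ x ^ α = -∑ j ∈ Finset.range α, crel j * φ x ^ j :=
          eq_neg_of_add_eq_zero_left hrelEq
        have hks : φ x ^ k = ∑ j ∈ Finset.range α, -(crel j) * φ x ^ (j + (k - α)) := by
          calc φ x ^ k = φ x ^ α * φ x ^ (k - α) := by rw [← pow_add]; congr 1; omega
          _ = (-∑ j ∈ Finset.range α, crel j * φ x ^ j) * φ x ^ (k - α) := by rw [hξα]
          _ = ∑ j ∈ Finset.range α, -(crel j) * φ x ^ (j + (k - α)) := by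
                rw [neg_mul, Finset.sum_mul, ← Finset.sum_neg_distrib]
                exact Finset.sum_congr rfl fun j _ => by rw [pow_add]; ring
        rw [hks]
        refine inS_sum _ _ fun j hj => inS_smul (sat_neg 𝒜 G (hcrelSat j (Finset.mem_range.mp hj)))
          (ih (j + (k - α)) ?_)
        have := Finset.mem_range.mp hj
        omega
  have inS_neg : ∀ {y}, InS 𝒜 G x α y → InS 𝒜 G x α (-y) := by
    intro y hy
    have := inS_smul (sat_neg 𝒜 G (sat_one 𝒜 G)) hy
    simpa using this
  have inS_mul : ∀ {y z}, InS 𝒜 G x α y → InS 𝒜 G x α z → InS 𝒜 G x α (y * z) := by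
    rintro y z ⟨c, hc, rfl⟩ hz
    rw [Finset.sum_mul]
    refine inS_sum _ _ fun i _ => ?_
    rw [mul_assoc]
    refine inS_smul (hc i) ?_
    obtain ⟨c', hc', rfl⟩ := hz
    rw [Finset.mul_sum]
    refine inS_sum _ _ fun j _ => ?_
    have heq : φ x ^ (i : ℕ) * (c' j * φ x ^ (j : ℕ)) = c' j * φ x ^ ((i : ℕ) + (j : ℕ)) := by
      rw [pow_add]; ring
    rw [heq]
    exact inS_smul (hc' j) (hxpow _)
  have inS_div : ∀ {y H'} (_ : H' ∈ G) (e : ι) (_ : H' ∈ 𝒜 e) (_ : H' ≠ 0),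
      InS 𝒜 G x α y → InS 𝒜 G x α (y / φ H') := by
    rintro y H' hH' e hH'e hH'0 ⟨c, hc, rfl⟩
    exact ⟨fun j => c j / φ H', fun j => sat_div 𝒜 G (hc j) hH' hH'e hH'0,
      by rw [Finset.sum_div]; exact Finset.sum_congr rfl fun j _ => by ring⟩
  -- the image of `G[x]` lies in `S`
  have hcl : ∀ a ∈ Subring.closure ((G : Set A) ∪ {x}), InS 𝒜 G x α (φ a) := by
    intro a ha
    induction ha using Subring.closure_induction with
    | mem b hb =>
      rcases hb with hb | hb
      · exact inS_sat ⟨b, 1, hb, G.one_mem, ⟨0, SetLike.GradedOne.one_mem⟩, one_ne_zero, by simp [hφdef]⟩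
      · rw [Set.mem_singleton_iff] at hb; subst hb; simpa using hxpow 1
    | zero => rw [map_zero]; exact inS_zero
    | one => rw [map_one]; simpa using hxpow 0
    | add b c _ _ hb hc => rw [map_add]; exact inS_add hb hc
    | neg b _ hb => rw [map_neg]; exact inS_neg hb
    | mul b c _ _ hb hc => rw [map_mul]; exact inS_mul hb hc
  -- main existence step
  intro y hy
  obtain ⟨g, h, hgcl, hhcl, ⟨f, hhf⟩, hh0, hy⟩ := hy
  have hinvS : InS 𝒜 G x α (φ h)⁻¹ := by
    obtain ⟨n, b, H, hbG, hHG, hH0, key⟩ := Stmt2Aux.exists_common_denom G x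
      (Stmt2Aux.isIntegral_xi 𝒜 G x α hα crel hcrelSat hrelEq)
      (Stmt2Aux.inS_mem_adjoin 𝒜 G x α (hcl h hhcl)) hh0
    set a : A := ∑ j ∈ Finset.range n, b j * x ^ j with hadef
    obtain ⟨e', he'⟩ := exists_ne_zero_component 𝒜 hH0
    set a' : A := (DirectSum.decompose 𝒜 a (e' - f) : A) with ha'def
    have hcomp : (DirectSum.decompose 𝒜 H e' : A) = h * a' := by
      have h1 : (DirectSum.decompose 𝒜 (h * a) (f + (e' - f)) : A)
          = h * (DirectSum.decompose 𝒜 a (e' - f) : A) := decompose_mul_left 𝒜 hhf _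
      rw [key] at h1
      rwa [show f + (e' - f) = e' from by abel] at h1
    set Hs : A := (DirectSum.decompose 𝒜 H e' : A) with hHsdef
    have hHsG : Hs ∈ G := hG H hHG e'
    have hHse : Hs ∈ 𝒜 e' := SetLike.coe_mem _
    have hHs0 : Hs ≠ 0 := he'
    have hφHs : φ Hs = φ h * φ a' := by
      rw [hcomp, map_mul]
    have hφHs0 : φ Hs ≠ 0 := algMap_ne_zero hHs0
    have hinva : (φ h)⁻¹ = φ a' / φ Hs := by
      rw [eq_div_iff hφHs0, hφHs, ← mul_assoc, inv_mul_cancel₀ (algMap_ne_zero hh0), one_mul]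
    have ha'cl : a' ∈ Subring.closure ((G : Set A) ∪ {x}) := by
      rw [ha'def, hadef, decompose_sum 𝒜]
      refine Subring.sum_mem _ fun j hj => ?_
      have hxj : x ^ j ∈ 𝒜 (j • d) := SetLike.pow_mem_graded j hx
      have h2 : (DirectSum.decompose 𝒜 (b j * x ^ j) ((e' - f - j • d) + j • d) : A)
          = (DirectSum.decompose 𝒜 (b j) (e' - f - j • d) : A) * x ^ j :=
        decompose_mul_right 𝒜 hxj _
      rw [show (e' - f - j • d) + j • d = e' - f from by abel] at h2
      rw [h2]
      have hxcl : x ∈ Subring.closure ((G : Set A) ∪ {x}) :=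
        Subring.subset_closure (Or.inr rfl)
      exact Subring.mul_mem _ (Subring.subset_closure (Or.inl (hG _ (hbG j) _)))
        (pow_mem hxcl j)
    rw [hinva]
    exact inS_div hHsG e' hHse hHs0 (hcl a' ha'cl)
  have hyS : InS 𝒜 G x α y := by
    rw [hy, div_eq_mul_inv]
    exact inS_mul (hcl g hgcl) hinvS
  -- uniqueness
  have huniq : ∀ c1 c2 : Fin α → FractionRing A, (∀ j, Sat 𝒜 G (c1 j)) → (∀ j, Sat 𝒜 G (c2 j)) →
      (∑ j : Fin α, c1 j * φ x ^ (j : ℕ)) = (∑ j : Fin α, c2 j * φ x ^ (j : ℕ)) → c1 = c2 := by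
    intro c1 c2 h1 h2 hsum
    by_contra hne
    obtain ⟨j0, hj0⟩ := Function.ne_iff.mp hne
    set cc : ℕ → FractionRing A :=
      fun j => if hj : j < α then c1 ⟨j, hj⟩ - c2 ⟨j, hj⟩ else 0 with hccdef
    refine hmin (α - 1) (by omega) cc ?_ ?_ ?_
    · intro j hj
      have hj' : j < α := by omega
      have hs : Sat 𝒜 G (cc j) := by
        rw [hccdef]
        dsimp only
        rw [dif_pos hj']
        rw [sub_eq_add_neg]
        exact sat_add 𝒜 G (h1 _) (sat_neg 𝒜 G (h2 _))
      exact hs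
    · refine ⟨(j0 : ℕ), by omega, ?_⟩
      rw [hccdef]
      simp only [Fin.is_lt, dif_pos, Fin.eta]
      exact sub_ne_zero_of_ne hj0
    · rw [show α - 1 + 1 = α from by omega]
      rw [Finset.sum_range fun j => cc j * φ x ^ j]
      have : ∀ j : Fin α, cc (j : ℕ) * φ x ^ (j : ℕ) = (c1 j - c2 j) * φ x ^ (j : ℕ) := by
        intro j
        rw [hccdef]
        simp only [Fin.is_lt, dif_pos, Fin.eta]
      rw [Finset.sum_congr rfl fun j _ => this j]
      simp only [sub_mul]
      rw [Finset.sum_sub_distrib, hsum, sub_self]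
  obtain ⟨c, hcS, hcE⟩ := hyS
  refine ⟨c, ⟨fun j => hcS j, hcE⟩, ?_⟩
  rintro c' ⟨hc'S, hc'E⟩
  exact huniq c' c (fun j => hc'S j) hcS (by rw [← hc'E, ← hcE])
end

section
/- Let f = Σ_{i=0}^{n} a_i X^i ∈ K[X] be the minimal polynomial of x over K, with ν a valuation of K such that ν(a_n) < ν(a_i) for all 0 ≤ i < n. Then for any extension ν' of ν to L = K(x), one has ν'(x) > 0. -/
/-- If the leading coefficient of the minimal polynomial of `x` has strictly smaller
value than all other coefficients, then `ν'(x) > 0` for any extension `ν'` of `ν`. -/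
theorem stmt6 {K L : Type*} [Field K] [Field L] [Algebra K L]
    {Γ : Type*} [AddCommGroup Γ] [LinearOrder Γ] [IsOrderedAddMonoid Γ]
    (ν' : AddValuation L (WithTop Γ)) (x : L) (hx : IsIntegral K x)
    (hmin : ∀ i < (minpoly K x).natDegree,
      ν' (algebraMap K L ((minpoly K x).coeff (minpoly K x).natDegree))
        < ν' (algebraMap K L ((minpoly K x).coeff i))) :
    0 < ν' x := by
  by_contra h
  push_neg at h
  set f := minpoly K x with hf
  set n := f.natDegree with hn
  have hmon : f.Monic := minpoly.monic hx
  have hlead : f.coeff n = 1 := hmon.coeff_natDegree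
  have h0 : ∀ i < n, (0 : WithTop Γ) < ν' (algebraMap K L (f.coeff i)) := by
    intro i hi
    have := hmin i hi
    rwa [hlead, map_one, AddValuation.map_one] at this
  -- x^n = - ∑ i in range n, a_i x^i
  have haev : (Polynomial.aeval x) f = 0 := minpoly.aeval K x
  have hsum : x ^ n + ∑ i ∈ Finset.range n, algebraMap K L (f.coeff i) * x ^ i = 0 := by
    have := Polynomial.aeval_eq_sum_range (R := K) (S := L) (p := f) x
    rw [Finset.sum_range_succ] at this
    rw [← hn] at this
    simp only [Algebra.smul_def, hlead, map_one, one_mul] at this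
    rw [haev] at this
    linear_combination -this
  have hxn : x ^ n = - ∑ i ∈ Finset.range n, algebraMap K L (f.coeff i) * x ^ i := by
    linear_combination hsum
  have hgle : (n : ℕ) • ν' x ≤ 0 := nsmul_nonpos h n
  have hterm : ∀ i ∈ Finset.range n,
      (n : ℕ) • ν' x < ν' (algebraMap K L (f.coeff i) * x ^ i) := by
    intro i hi
    rw [Finset.mem_range] at hi
    rw [AddValuation.map_mul, AddValuation.map_pow]
    have h1 : (n : ℕ) • ν' x ≤ i • ν' x := by
      have : (n : ℕ) • ν' x = i • ν' x + (n - i) • ν' x := by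
        rw [← add_nsmul, Nat.add_sub_cancel' hi.le]
      rw [this]
      calc i • ν' x + (n - i) • ν' x ≤ i • ν' x + 0 :=
            add_le_add_right (nsmul_nonpos h _) _
        _ = i • ν' x := add_zero _
    have hne : i • ν' x ≠ ⊤ := by
      intro ht
      have : i • ν' x ≤ 0 := nsmul_nonpos h i
      rw [ht] at this
      exact (lt_irrefl _ (lt_of_lt_of_le (WithTop.coe_lt_top 0) this)).elim
    calc (n : ℕ) • ν' x ≤ i • ν' x := h1
      _ = 0 + i • ν' x := (zero_add _).symm
      _ < ν' (algebraMap K L (f.coeff i)) + i • ν' x :=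
          WithTop.add_lt_add_right hne (h0 i hi)
  have hlt : (n : ℕ) • ν' x < ν' (∑ i ∈ Finset.range n, algebraMap K L (f.coeff i) * x ^ i) :=
    ν'.map_lt_sum (ne_top_of_le_ne_top (WithTop.coe_lt_top (0:Γ)).ne hgle) hterm
  rw [← AddValuation.map_pow, hxn, AddValuation.map_neg] at hlt
  exact lt_irrefl _ hlt
end
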